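/- Let μ_i and μ_{i|j} (i ≠ j ∈ {1,2,3}) be reals, and suppose F_i, F_{i|j} are twice-differentiable functions with F_i(1) = F_{i|j}(1) = 1, F_i'(1) = μ_i, F_{i|j}'(1) = μ_{i|j}. If the denominator below is nonzero, then the limit as s → 1 of (F_1(1−F_{2|3}F_{3|2}) − F_2(F_{1|2}−F_{1|3}F_{3|2}) − F_3(F_{1|3}−F_{1|2}F_{2|3}))/(1 − F_{1|2}F_{2|1} − F_{1|3}F_{3|1} − F_{2|3}F_{3|2} + F_{1|2}F_{2|3}F_{3|1} + F_{1|3}F_{3|2}F_{2|1}) equals (μ_1(μ_{2|3}+μ_{3|2}) + μ_2(μ_{1|2}−μ_{1|3}−μ_{3|2}) + μ_3(μ_{1|3}−μ_{1|2}−μ_{2|3}) + μ_{2|3}μ_{3|2} − μ_{1|3}μ_{3|2} − μ_{1|2}μ_{2|3}) / (μ_{1|2}μ_{2|1} + μ_{1|3}μ_{3|1} + μ_{2|3}μ_{3|2} − μ_{1|2}μ_{2|3} − μ_{1|3}μ_{3|2} − μ_{2|1}μ_{1|3} − μ_{2|3}μ_{3|1} − μ_{3|1}μ_{1|2} − μ_{3|2}μ_{2|1}).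 -/

import Mathlib

open Filter

/-- Second-order jet data at `1`. -/
structure T2 (f : ℝ → ℝ) (a b c : ℝ) : Prop where
  smooth : ContDiff ℝ 2 f
  v : f 1 = a
  d1 : deriv f 1 = b
  d2 : deriv (deriv f) 1 = c

theorem T2.derivSmooth {f a b c} (h : T2 f a b c) : ContDiff ℝ 1 (deriv f) := by
  have h' : ContDiff ℝ (1+1) f := by norm_num; exact h.smooth
  exact (contDiff_succ_iff_deriv.mp h').2.2

theorem T2.diff {f a b c} (h : T2 f a b c) : Differentiable ℝ f :=
  h.smooth.differentiable two_ne_zero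

theorem T2.diffDeriv {f a b c} (h : T2 f a b c) : Differentiable ℝ (deriv f) :=
  h.derivSmooth.differentiable one_ne_zero

theorem T2.one : T2 (fun _ => 1) 1 0 0 := by
  refine ⟨contDiff_const, rfl, by simp, by simp⟩

theorem T2.mul {f g a b c a' b' c'} (hf : T2 f a b c) (hg : T2 g a' b' c') :
    T2 (fun s => f s * g s) (a * a') (b * a' + a * b') (c * a' + 2 * b * b' + a * c') := by
  have key : deriv (fun s => f s * g s) = fun s => deriv f s * g s + f s * deriv g s := by
    funext x; exact deriv_mul (hf.diff x) (hg.diff x)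
  have hfAt : HasDerivAt f b 1 := hf.d1 ▸ (hf.diff 1).hasDerivAt
  have hgAt : HasDerivAt g b' 1 := hg.d1 ▸ (hg.diff 1).hasDerivAt
  have hf2 : HasDerivAt (deriv f) c 1 := hf.d2 ▸ (hf.diffDeriv 1).hasDerivAt
  have hg2 : HasDerivAt (deriv g) c' 1 := hg.d2 ▸ (hg.diffDeriv 1).hasDerivAt
  refine ⟨hf.smooth.mul hg.smooth, by rw [hf.v, hg.v], ?_, ?_⟩
  · rw [key]; simp only [hf.v, hg.v, hf.d1, hg.d1]
  · rw [key]
    have H := (hf2.mul hgAt).add (hfAt.mul hg2)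
    rw [hf.v, hg.v, hf.d1, hg.d1] at H
    exact H.deriv.trans (by ring)

theorem T2.sub {f g a b c a' b' c'} (hf : T2 f a b c) (hg : T2 g a' b' c') :
    T2 (fun s => f s - g s) (a - a') (b - b') (c - c') := by
  have key : deriv (fun s => f s - g s) = fun s => deriv f s - deriv g s := by
    funext x; exact deriv_sub (hf.diff x) (hg.diff x)
  have hf2 : HasDerivAt (deriv f) c 1 := hf.d2 ▸ (hf.diffDeriv 1).hasDerivAt
  have hg2 : HasDerivAt (deriv g) c' 1 := hg.d2 ▸ (hg.diffDeriv 1).hasDerivAt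
  refine ⟨hf.smooth.sub hg.smooth, by rw [hf.v, hg.v], ?_, ?_⟩
  · rw [key]; simp only [hf.d1, hg.d1]
  · rw [key]; exact (hf2.sub hg2).deriv

theorem T2.add {f g a b c a' b' c'} (hf : T2 f a b c) (hg : T2 g a' b' c') :
    T2 (fun s => f s + g s) (a + a') (b + b') (c + c') := by
  have key : deriv (fun s => f s + g s) = fun s => deriv f s + deriv g s := by
    funext x; exact deriv_add (hf.diff x) (hg.diff x)
  have hf2 : HasDerivAt (deriv f) c 1 := hf.d2 ▸ (hf.diffDeriv 1).hasDerivAt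
  have hg2 : HasDerivAt (deriv g) c' 1 := hg.d2 ▸ (hg.diffDeriv 1).hasDerivAt
  refine ⟨hf.smooth.add hg.smooth, by rw [hf.v, hg.v], ?_, ?_⟩
  · rw [key]; simp only [hf.d1, hg.d1]
  · rw [key]; exact (hf2.add hg2).deriv

theorem T2.congr {f a b c a' b' c'} (h : T2 f a b c) (ha : a = a') (hb : b = b')
    (hc : c = c') : T2 f a' b' c' := ha ▸ hb ▸ hc ▸ h

/-- Double L'Hôpital at `1`. -/
theorem lhop2 {N D : ℝ → ℝ} {A B : ℝ} (hN : T2 N 0 0 A) (hD : T2 D 0 0 B) (hB : B ≠ 0) :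
    Tendsto (fun s => N s / D s) (nhdsWithin 1 {(1 : ℝ)}ᶜ) (nhds (A / B)) := by
  have hslopeN : Tendsto (fun s => deriv N s / (s - 1)) (nhdsWithin 1 {(1 : ℝ)}ᶜ) (nhds A) := by
    have h : HasDerivAt (deriv N) A 1 := hN.d2 ▸ (hN.diffDeriv 1).hasDerivAt
    refine (hasDerivAt_iff_tendsto_slope.mp h).congr' ?_
    filter_upwards with s
    simp [slope_def_field, hN.d1]
  have hslopeD : Tendsto (fun s => deriv D s / (s - 1)) (nhdsWithin 1 {(1 : ℝ)}ᶜ) (nhds B) := by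
    have h : HasDerivAt (deriv D) B 1 := hD.d2 ▸ (hD.diffDeriv 1).hasDerivAt
    refine (hasDerivAt_iff_tendsto_slope.mp h).congr' ?_
    filter_upwards with s
    simp [slope_def_field, hD.d1]
  have hg' : ∀ᶠ s in nhdsWithin 1 {(1 : ℝ)}ᶜ, deriv D s ≠ 0 := by
    filter_upwards [hslopeD.eventually_ne hB] with s hs h0
    exact hs (by rw [h0]; simp)
  have hdiv : Tendsto (fun s => deriv N s / deriv D s) (nhdsWithin 1 {(1 : ℝ)}ᶜ)
      (nhds (A / B)) := by
    refine ((hslopeN.div hslopeD hB)).congr' ?_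
    filter_upwards [self_mem_nhdsWithin] with s hs
    have hs1 : s - 1 ≠ 0 := sub_ne_zero.mpr hs
    exact div_div_div_cancel_right₀ hs1 _ _
  have hNa : Tendsto N (nhdsWithin 1 {(1 : ℝ)}ᶜ) (nhds 0) := by
    have := hN.smooth.continuous.tendsto 1
    rw [hN.v] at this
    exact this.mono_left nhdsWithin_le_nhds
  have hDa : Tendsto D (nhdsWithin 1 {(1 : ℝ)}ᶜ) (nhds 0) := by
    have := hD.smooth.continuous.tendsto 1
    rw [hD.v] at this
    exact this.mono_left nhdsWithin_le_nhds
  exact deriv.lhopital_zero_nhdsNE (Eventually.of_forall fun x => hN.diff x) hg' hNa hDa hdiv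

theorem stmt_13 (F1 F2 F3 F12 F21 F13 F31 F23 F32 : ℝ → ℝ)
    (μ1 μ2 μ3 μ12 μ21 μ13 μ31 μ23 μ32 : ℝ)
    (hc1 : ContDiff ℝ 2 F1) (hc2 : ContDiff ℝ 2 F2) (hc3 : ContDiff ℝ 2 F3)
    (hc12 : ContDiff ℝ 2 F12) (hc21 : ContDiff ℝ 2 F21)
    (hc13 : ContDiff ℝ 2 F13) (hc31 : ContDiff ℝ 2 F31)
    (hc23 : ContDiff ℝ 2 F23) (hc32 : ContDiff ℝ 2 F32)
    (hv1 : F1 1 = 1) (hv2 : F2 1 = 1) (hv3 : F3 1 = 1)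
    (hv12 : F12 1 = 1) (hv21 : F21 1 = 1) (hv13 : F13 1 = 1)
    (hv31 : F31 1 = 1) (hv23 : F23 1 = 1) (hv32 : F32 1 = 1)
    (hd1 : deriv F1 1 = μ1) (hd2 : deriv F2 1 = μ2) (hd3 : deriv F3 1 = μ3)
    (hd12 : deriv F12 1 = μ12) (hd21 : deriv F21 1 = μ21)
    (hd13 : deriv F13 1 = μ13) (hd31 : deriv F31 1 = μ31)
    (hd23 : deriv F23 1 = μ23) (hd32 : deriv F32 1 = μ32)
    (hden : μ12 * μ21 + μ13 * μ31 + μ23 * μ32 - μ12 * μ23 - μ13 * μ32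
      - μ21 * μ13 - μ23 * μ31 - μ31 * μ12 - μ32 * μ21 ≠ 0) :
    Filter.Tendsto
      (fun s : ℝ =>
        (F1 s * (1 - F23 s * F32 s) - F2 s * (F12 s - F13 s * F32 s)
          - F3 s * (F13 s - F12 s * F23 s)) /
        (1 - F12 s * F21 s - F13 s * F31 s - F23 s * F32 s
          + F12 s * F23 s * F31 s + F13 s * F32 s * F21 s))
      (nhdsWithin 1 {(1 : ℝ)}ᶜ)
      (nhds ((μ1 * (μ23 + μ32) + μ2 * (μ12 - μ13 - μ32) + μ3 * (μ13 - μ12 - μ23)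
        + μ23 * μ32 - μ13 * μ32 - μ12 * μ23) /
        (μ12 * μ21 + μ13 * μ31 + μ23 * μ32 - μ12 * μ23 - μ13 * μ32
          - μ21 * μ13 - μ23 * μ31 - μ31 * μ12 - μ32 * μ21))) := by
  set num := μ1 * (μ23 + μ32) + μ2 * (μ12 - μ13 - μ32) + μ3 * (μ13 - μ12 - μ23)
    + μ23 * μ32 - μ13 * μ32 - μ12 * μ23 with hnum_def
  set den := μ12 * μ21 + μ13 * μ31 + μ23 * μ32 - μ12 * μ23 - μ13 * μ32
    - μ21 * μ13 - μ23 * μ31 - μ31 * μ12 - μ32 * μ21 with hden_def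
  have hT1 : T2 F1 1 μ1 (deriv (deriv F1) 1) := ⟨hc1, hv1, hd1, rfl⟩
  have hT2 : T2 F2 1 μ2 (deriv (deriv F2) 1) := ⟨hc2, hv2, hd2, rfl⟩
  have hT3 : T2 F3 1 μ3 (deriv (deriv F3) 1) := ⟨hc3, hv3, hd3, rfl⟩
  have hT12 : T2 F12 1 μ12 (deriv (deriv F12) 1) := ⟨hc12, hv12, hd12, rfl⟩
  have hT21 : T2 F21 1 μ21 (deriv (deriv F21) 1) := ⟨hc21, hv21, hd21, rfl⟩
  have hT13 : T2 F13 1 μ13 (deriv (deriv F13) 1) := ⟨hc13, hv13, hd13, rfl⟩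
  have hT31 : T2 F31 1 μ31 (deriv (deriv F31) 1) := ⟨hc31, hv31, hd31, rfl⟩
  have hT23 : T2 F23 1 μ23 (deriv (deriv F23) 1) := ⟨hc23, hv23, hd23, rfl⟩
  have hT32 : T2 F32 1 μ32 (deriv (deriv F32) 1) := ⟨hc32, hv32, hd32, rfl⟩
  have hN := ((hT1.mul (T2.one.sub (hT23.mul hT32))).sub
      (hT2.mul (hT12.sub (hT13.mul hT32)))).sub
      (hT3.mul (hT13.sub (hT12.mul hT23)))
  have hD := (((((T2.one.sub (hT12.mul hT21)).sub (hT13.mul hT31)).sub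
      (hT23.mul hT32)).add ((hT12.mul hT23).mul hT31)).add
      ((hT13.mul hT32).mul hT21))
  have hN' := hN.congr (a' := 0) (b' := 0) (c' := (-2) * num) (by norm_num) (by ring)
    (by rw [hnum_def]; ring)
  have hD' := hD.congr (a' := 0) (b' := 0) (c' := (-2) * den) (by norm_num) (by ring)
    (by rw [hden_def]; ring)
  have hB : (-2 : ℝ) * den ≠ 0 := by
    intro h; exact hden (by linarith [mul_eq_zero.mp h])
  have key := lhop2 hN' hD' hB
  have heq : (-2 : ℝ) * num / ((-2) * den) = num / den :=
    mul_div_mul_left num den (by norm_num)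
  rw [heq] at key
  exact key
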